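/- arXiv:2401.14605 — 5 statements merged into one kernel-verified Lean document; each statement's English description precedes it below -/
import Mathlib

section
/- Let X be a standard Borel space, let E be an aperiodic, countable Borel equivalence relation on X, and let n, k > 1 be integers. If there exists a Borel infinite complete section Y ⊆ X such that the strong Borel Ramsey property F →_B (F)^n_k holds, where F = E restricted to Y, then the strong Borel Ramsey property E →_B (E)^n_k holds. -/
open Classical

noncomputable section

/-- `Y` is a complete section for `E`: it meets every `E`-class. -/
def IsCompleteSection {X : Type*} (E : X → X → Prop) (Y : Set X) : Prop :=
  ∀ x : X, ∃ y ∈ Y, E x y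

/-- `Y` is an infinite complete section for `E`: it meets every `E`-class in an infinite set. -/
def IsInfiniteCompleteSection {X : Type*} (E : X → X → Prop) (Y : Set X) : Prop :=
  ∀ x : X, {y | y ∈ Y ∧ E x y}.Infinite

/-- A coloring `c` of the `n`-element subsets of single `E`-classes (encoded as a function on
finsets) is `E`-monochromatic on `Y`: for every `x` there is a color `a` such that every
`n`-element subset of `Y` contained in `[x]_E` gets color `a`. -/
def IsMonochromatic {X : Type*} (E : X → X → Prop) (n : ℕ) {k : ℕ}
    (c : Finset X → Fin k) (Y : Set X) : Prop :=
  ∀ x : X, ∃ a : Fin k, ∀ A : Finset X, A.card = n → ↑A ⊆ Y → (∀ y ∈ A, E x y) → c A = a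

/-- `c` is a Borel coloring of dimension `n`: the induced map on `n`-tuples is measurable. -/
def IsBorelColoring {X : Type*} [MeasurableSpace X] (n : ℕ) {k : ℕ}
    (c : Finset X → Fin k) : Prop :=
  Measurable fun v : Fin n → X => c (Set.finite_range v).toFinset

/-- The strong Borel Ramsey property `E →_B (E)^n_k`: every Borel `E`-coloring of dimension
`n` by `k` colors admits a Borel `E`-monochromatic infinite complete section. -/
def StrongBorelRamsey {X : Type*} [MeasurableSpace X] (E : X → X → Prop) (n k : ℕ) : Prop :=
  ∀ c : Finset X → Fin k, IsBorelColoring n c →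
    ∃ Y : Set X, MeasurableSet Y ∧ IsInfiniteCompleteSection E Y ∧ IsMonochromatic E n c Y

/-- The weak Borel Ramsey property `E →*_B (E)^n_k`: every Borel `E`-coloring of dimension
`n` by `k` colors admits a Borel `E`-monochromatic complete section. -/
def WeakBorelRamsey {X : Type*} [MeasurableSpace X] (E : X → X → Prop) (n k : ℕ) : Prop :=
  ∀ c : Finset X → Fin k, IsBorelColoring n c →
    ∃ Y : Set X, MeasurableSet Y ∧ IsCompleteSection E Y ∧ IsMonochromatic E n c Y

/-- `E` is smooth: Borel reducible to equality on a standard Borel space. -/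
def IsSmooth {X : Type*} [MeasurableSpace X] (E : X → X → Prop) : Prop :=
  ∃ (Z : Type) (mZ : MeasurableSpace Z), @StandardBorelSpace Z mZ ∧
    ∃ f : X → Z, @Measurable X Z _ mZ f ∧ ∀ x y : X, E x y ↔ f x = f y

/-- The eventual agreement relation `E₀` on Cantor space `2^ℕ`. -/
def E0 (x y : ℕ → Bool) : Prop := ∃ n : ℕ, ∀ m ≥ n, x m = y m

/-- `Σ_{i<δ(x,y)} x i + Σ_{i<δ(x,y)} y i`, where `δ(x,y)` is the least `n` with
`x m = y m` for all `m ≥ n`; junk value `0` if `x` and `y` are not `E₀`-related. -/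
def colorSum (x y : ℕ → Bool) : ℕ :=
  if h : ∃ n : ℕ, ∀ m ≥ n, x m = y m then
    ((Finset.range (Nat.find h)).sum fun i => (x i).toNat) +
    ((Finset.range (Nat.find h)).sum fun i => (y i).toNat)
  else 0

/-- The coloring `c` of the paper: a pair `{x,y}` of distinct `E₀`-related points gets color
`0` (representing color `1`) if `colorSum x y` is even, and color `1` (representing color `2`)
otherwise. -/
def c0 : Finset (ℕ → Bool) → Fin 2 := fun A =>
  if ∃ x y : ℕ → Bool, x ≠ y ∧ A = {x, y} ∧ E0 x y ∧ Even (colorSum x y) then 0 else 1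

/-- The subrelation `F` of `E₀`: `x F y` iff `x = y` or `c ({x,y}) = 1` (even `colorSum`). -/
def F0 (x y : ℕ → Bool) : Prop := x = y ∨ (E0 x y ∧ Even (colorSum x y))

/-- The map flipping coordinate `0`. -/
def flip0 (x : ℕ → Bool) : ℕ → Bool := fun n => if n = 0 then !(x 0) else x n

/-- Eventual agreement of `X`-valued sequences: the relation `E₀(X)` on `X^ℕ`
(denoted `E₁` when `X` is uncountable). -/
def E1rel {X : Type*} (u v : ℕ → X) : Prop := ∃ N : ℕ, ∀ j ≥ N, u j = v j

/-- `S` is a monochromatic reduction to `E₁` for the coloring `c` of dimension `n`: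
each `S x` is injective, its range is a monochromatic subset of `[x]_E`, and
`x E y ↔ S x E₁ S y`. -/
def IsMonochromaticReduction {X : Type*} (E : X → X → Prop) (n : ℕ) {k : ℕ}
    (c : Finset X → Fin k) (S : X → ℕ → X) : Prop :=
  (∀ x : X, Function.Injective (S x)) ∧
  (∀ x : X, (∀ i : ℕ, E x (S x i)) ∧
    ∃ a : Fin k, ∀ A : Finset X, A.card = n → ↑A ⊆ Set.range (S x) → c A = a) ∧
  (∀ x y : X, E x y ↔ E1rel (S x) (S y))

/-- `c` is an almost transitive coloring of dimension `n` for `E`: for every `m ≥ n`, every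
`A ∈ [X]^m_E` and all `(n-1)`-element subsets `B₁, B₂ ⊆ A`, one has
`c ({z} ∪ B₁) = c ({z} ∪ B₂)` for all but finitely many `z` in the `E`-saturation of `A`
outside `B₁ ∪ B₂`. -/
def AlmostTransitive {X : Type*} (E : X → X → Prop) (n : ℕ) {k : ℕ}
    (c : Finset X → Fin k) : Prop :=
  ∀ m : ℕ, n ≤ m → ∀ A : Finset X, A.card = m → (∀ x ∈ A, ∀ y ∈ A, E x y) →
    ∀ B₁ B₂ : Finset X, B₁ ⊆ A → B₂ ⊆ A → B₁.card = n - 1 → B₂.card = n - 1 →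
      {z : X | (∃ a ∈ A, E a z) ∧ z ∉ B₁ ∪ B₂ ∧ c (insert z B₁) ≠ c (insert z B₂)}.Finite
/-- If there is a Borel infinite complete section `Y` such that the strong Borel Ramsey
property holds for `F = E ↾ Y`, then `E →_B (E)^n_k` holds. -/
theorem strong_borel_ramsey_of_complete_section {X : Type*} [MeasurableSpace X] [StandardBorelSpace X]
    (E : X → X → Prop) (hE : Equivalence E)
    (hEBorel : MeasurableSet {p : X × X | E p.1 p.2})
    (hcount : ∀ x : X, {y | E x y}.Countable)
    (haper : ∀ x : X, {y | E x y}.Infinite)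
    (n k : ℕ) (hn : 1 < n) (hk : 1 < k)
    (hex : ∃ Y : Set X, MeasurableSet Y ∧ IsInfiniteCompleteSection E Y ∧
      StrongBorelRamsey (fun a b : Y => E a b) n k) :
    StrongBorelRamsey E n k := by
  obtain ⟨Y, hY, hYinf, hYR⟩ := hex
  intro c hc
  set c' : Finset Y → Fin k := fun A => c (A.image Subtype.val) with hc'def
  have hc' : IsBorelColoring n c' := by
    have hg : Measurable fun v : Fin n → Y => (fun i => (v i : X)) :=
      measurable_pi_lambda _ fun i => measurable_subtype_coe.comp (measurable_pi_apply i)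
    have h2 := hc.comp hg
    have heq : (fun v : Fin n → Y => c' (Set.finite_range v).toFinset)
        = (fun v : Fin n → Y => c ((Set.finite_range (fun i => (v i : X))).toFinset)) := by
      funext v
      show c ((Set.finite_range v).toFinset.image Subtype.val) = _
      congr 1
      ext x
      simp [Set.Finite.mem_toFinset]
    unfold IsBorelColoring
    rw [heq]
    exact h2
  obtain ⟨Z, hZ, hZinf, hZmono⟩ := hYR c' hc'
  refine ⟨Subtype.val '' Z, hY.subtype_image hZ, ?_, ?_⟩
  · intro x
    obtain ⟨y, hyY, hxy⟩ := (hYinf x).nonempty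
    have h1 := hZinf ⟨y, hyY⟩
    have h2 : (Subtype.val '' {z : Y | z ∈ Z ∧ E y z}).Infinite :=
      h1.image (Set.injOn_of_injective Subtype.val_injective)
    refine h2.mono ?_
    rintro _ ⟨z, ⟨hzZ, hEz⟩, rfl⟩
    exact ⟨⟨z, hzZ, rfl⟩, hE.trans hxy hEz⟩
  · intro x
    obtain ⟨y, hyY, hxy⟩ := (hYinf x).nonempty
    obtain ⟨a, ha⟩ := hZmono ⟨y, hyY⟩
    refine ⟨a, fun A hcard hsub hEA => ?_⟩
    classical
    set A' : Finset Y := A.subtype (· ∈ Y) with hA'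
    have hAY : ∀ z ∈ A, z ∈ Y := by
      intro z hz
      obtain ⟨w, hwZ, rfl⟩ := hsub hz
      exact w.2
    have hfilter : A.filter (· ∈ Y) = A := Finset.filter_true_of_mem hAY
    have himg : A'.image Subtype.val = A := by
      ext z
      simp only [Finset.mem_image]
      constructor
      · rintro ⟨w, hw, rfl⟩
        exact Finset.mem_subtype.mp hw
      · intro hz
        exact ⟨⟨z, hAY z hz⟩, Finset.mem_subtype.mpr hz, rfl⟩
    have hcard' : A'.card = n := by
      rw [hA', Finset.card_subtype, hfilter, hcard]
    have hsub' : ↑A' ⊆ Z := by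
      intro z hz
      have hzA : (z : X) ∈ A := by
        have := Finset.mem_subtype.mp hz
        exact this
      obtain ⟨w, hwZ, hwz⟩ := hsub hzA
      have : w = z := Subtype.val_injective hwz
      exact this ▸ hwZ
    have hE' : ∀ z ∈ A', E (y : X) (z : X) := fun z hz =>
      hE.trans (hE.symm hxy) (hEA _ (Finset.mem_subtype.mp hz))
    have := ha A' hcard' hsub' hE'
    rw [hc'def] at this
    simp only at this
    rw [himg] at this
    exact this
end
end

section
/- Let E_0 be the eventual-agreement equivalence relation on the Cantor space 2^ℕ. For distinct x, y ∈ 2^ℕ with x E_0 y, let δ(x, y) = min{n : x(m) = y(m) for all m ≥ n}, and define c({x, y}) = 1 if Σ_{i<δ(x,y)} x(i) + Σ_{i<δ(x,y)} y(i) is even, and c({x, y}) = 2 otherwise. Then c is a Borel E_0-coloring of dimension 2 by 2 colors, and there exists no Borel E_0-monochromatic infinite complete section for c. -/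
open Classical

noncomputable section

/-- flip the coordinates in `t` -/
def flipF (t : Finset ℕ) (z : ℕ → Bool) : ℕ → Bool := fun n => xor (decide (n ∈ t)) (z n)

lemma flipF_flipF (s t : Finset ℕ) (z : ℕ → Bool) :
    flipF s (flipF t z) = flipF (symmDiff s t) z := by
  funext n
  simp only [flipF, Finset.mem_symmDiff]
  by_cases hs : n ∈ s <;> by_cases ht : n ∈ t <;> simp [hs, ht]

lemma flipF_empty (z : ℕ → Bool) : flipF ∅ z = z := by
  funext n; simp [flipF]

lemma flipF_involutive (t : Finset ℕ) : Function.Involutive (flipF t) := by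
  intro z
  rw [flipF_flipF, symmDiff_self]
  exact flipF_empty z

lemma flipF_ne_iff (t1 t2 : Finset ℕ) (z : ℕ → Bool) (i : ℕ) :
    flipF t1 z i ≠ flipF t2 z i ↔ i ∈ symmDiff t1 t2 := by
  simp only [flipF, Finset.mem_symmDiff]
  by_cases h1 : i ∈ t1 <;> by_cases h2 : i ∈ t2 <;> simp [h1, h2] <;> cases z i <;> simp

lemma E0_iff_flip {x y : ℕ → Bool} : E0 x y ↔ ∃ t : Finset ℕ, y = flipF t x := by
  constructor
  · rintro ⟨n, hn⟩
    refine ⟨(Finset.range n).filter (fun i => x i ≠ y i), ?_⟩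
    funext m
    by_cases hm : m ∈ (Finset.range n).filter (fun i => x i ≠ y i)
    · simp only [Finset.mem_filter, Finset.mem_range] at hm
      simp only [flipF, hm.2, decide_true, Finset.mem_filter]
      cases hx : x m <;> cases hy : y m <;> simp_all
    · have hxy : x m = y m := by
        by_cases hmn : m < n
        · by_contra hne
          exact hm (Finset.mem_filter.mpr ⟨Finset.mem_range.mpr hmn, hne⟩)
        · exact hn m (le_of_not_gt hmn)
      simp [flipF, hm, hxy]
  · rintro ⟨t, rfl⟩
    refine ⟨t.sup id + 1, fun m hm => ?_⟩
    have hmt : m ∉ t := by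
      intro h
      have := Finset.le_sup (f := id) h
      simp only [id] at this
      omega
    simp [flipF, hmt]

lemma flip_diff {x y : ℕ → Bool} {t : Finset ℕ} (h : y = flipF t x) :
    ∀ i, x i ≠ y i ↔ i ∈ t := by
  intro i
  subst h
  by_cases hi : i ∈ t <;> simp [flipF, hi] <;> cases x i <;> simp

lemma even_symmDiff_card (s t : Finset ℕ) :
    Even ((symmDiff s t).card) ↔ (Even s.card ↔ Even t.card) := by
  have h1 : (s ∪ t).card + (s ∩ t).card = s.card + t.card := Finset.card_union_add_card_inter s t
  have h2 : symmDiff s t = (s ∪ t) \ (s ∩ t) := symmDiff_eq_sup_sdiff_inf s t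
  have h3 : (symmDiff s t).card = (s ∪ t).card - (s ∩ t).card := by
    rw [h2, Finset.card_sdiff_of_subset Finset.inter_subset_union]
  have h4 : (s ∩ t).card ≤ (s ∪ t).card := Finset.card_le_card Finset.inter_subset_union
  rw [Nat.even_iff, Nat.even_iff, Nat.even_iff]
  omega

lemma even_colorSum_iff {x y : ℕ → Bool} (h : E0 x y) {t : Finset ℕ}
    (ht : ∀ i, x i ≠ y i ↔ i ∈ t) : Even (colorSum x y) ↔ Even t.card := by
  have h' : ∃ n : ℕ, ∀ m ≥ n, x m = y m := h
  rw [colorSum, dif_pos h']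
  have hspec : ∀ m ≥ Nat.find h', x m = y m := Nat.find_spec h'
  set N := Nat.find h' with hN
  have hsub : t ⊆ Finset.range N := by
    intro i hi
    rw [Finset.mem_range]
    by_contra hlt
    exact (ht i).mpr hi (hspec i (le_of_not_gt hlt))
  have hsum : ((Finset.range N).sum fun i => (x i).toNat) +
      ((Finset.range N).sum fun i => (y i).toNat)
      = (Finset.range N).sum (fun i => (x i).toNat + (y i).toNat) :=
    Finset.sum_add_distrib.symm
  rw [hsum]
  have hmod : ((Finset.range N).sum fun i => (x i).toNat + (y i).toNat) % 2
      = ((Finset.range N).sum fun i => if i ∈ t then 1 else 0) % 2 := by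
    rw [Finset.sum_nat_mod, Finset.sum_nat_mod _ 2 (fun i => if i ∈ t then 1 else 0)]
    congr 1
    refine Finset.sum_congr rfl (fun i _ => ?_)
    by_cases hi : i ∈ t
    · have hne := (ht i).mpr hi
      cases hx : x i <;> cases hy : y i <;> simp_all
    · have heq : x i = y i := by
        by_contra hne
        exact hi ((ht i).mp hne)
      cases hx : x i <;> cases hy : y i <;> simp_all
  have hcard : ((Finset.range N).sum fun i => if i ∈ t then 1 else 0) = t.card := by
    rw [Finset.sum_boole]
    norm_cast
    congr 1
    ext i
    simp only [Finset.mem_filter, Finset.mem_range]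
    exact ⟨fun h => h.2, fun h => ⟨Finset.mem_range.mp (hsub h), h⟩⟩
  rw [Nat.even_iff, Nat.even_iff]
  omega

lemma c0_zero_or_one (A : Finset (ℕ → Bool)) : c0 A = 0 ∨ c0 A = 1 := by
  unfold c0
  split
  · exact Or.inl rfl
  · exact Or.inr rfl

lemma pair_eq_pair' {x y a b : ℕ → Bool} (hxy : x ≠ y)
    (h : ({x, y} : Finset (ℕ → Bool)) = {a, b}) (hab : a ≠ b) :
    (a = x ∧ b = y) ∨ (a = y ∧ b = x) := by
  have hx : x ∈ ({a, b} : Finset (ℕ → Bool)) := by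
    rw [← h]; exact Finset.mem_insert_self x {y}
  have hy : y ∈ ({a, b} : Finset (ℕ → Bool)) := by
    rw [← h]; exact Finset.mem_insert.mpr (Or.inr (Finset.mem_singleton_self y))
  have ha : a ∈ ({x, y} : Finset (ℕ → Bool)) := by
    rw [h]; exact Finset.mem_insert_self a {b}
  simp only [Finset.mem_insert, Finset.mem_singleton] at hx hy ha
  rcases ha with ha | ha
  · left
    refine ⟨ha, ?_⟩
    rcases hy with hy | hy
    · exact absurd (ha.symm.trans hy.symm) hxy
    · exact hy.symm
  · right
    refine ⟨ha, ?_⟩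
    rcases hx with hx | hx
    · exact absurd (hx.trans ha) hxy
    · exact hx.symm

lemma E0_symm {x y : ℕ → Bool} (h : E0 x y) : E0 y x := by
  obtain ⟨n, hn⟩ := h
  exact ⟨n, fun m hm => (hn m hm).symm⟩

lemma c0_pair_eq_zero_iff {x y : ℕ → Bool} (hxy : x ≠ y) (hE : E0 x y) :
    c0 {x, y} = 0 ↔ Even (colorSum x y) := by
  obtain ⟨t, htflip⟩ := E0_iff_flip.mp hE
  have ht := flip_diff htflip
  have ht' : ∀ i, y i ≠ x i ↔ i ∈ t := fun i => (ne_comm).trans (ht i)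
  unfold c0
  split
  · rename_i hcond
    obtain ⟨a, b, hab, heq, hEab, heven⟩ := hcond
    have hgoal : Even (colorSum x y) := by
      rcases pair_eq_pair' hxy heq hab with ⟨rfl, rfl⟩ | ⟨rfl, rfl⟩
      · exact heven
      · rw [even_colorSum_iff hE ht]
        rw [even_colorSum_iff hEab ht'] at heven
        exact heven
    simpa using hgoal
  · rename_i hcond
    constructor
    · intro h0
      exact absurd h0 (by decide)
    · intro hev
      exact absurd ⟨x, y, hxy, rfl, hE, hev⟩ hcond

lemma flipF_eq_iff {t1 t2 : Finset ℕ} {z : ℕ → Bool} :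
    flipF t1 z = flipF t2 z ↔ t1 = t2 := by
  constructor
  · intro h
    by_contra hne
    have hnebot : symmDiff t1 t2 ≠ ⊥ := fun hb => hne (symmDiff_eq_bot.mp hb)
    obtain ⟨i, hi⟩ := Finset.nonempty_iff_ne_empty.mpr hnebot
    exact (flipF_ne_iff t1 t2 z i).mpr hi (congrFun h i)
  · rintro rfl; rfl

lemma flip_flip_eq (t1 t2 : Finset ℕ) (z : ℕ → Bool) :
    flipF t2 z = flipF (symmDiff t2 t1) (flipF t1 z) := by
  rw [flipF_flipF, symmDiff_symmDiff_cancel_right]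

lemma E0_flip (t1 t2 : Finset ℕ) (z : ℕ → Bool) : E0 (flipF t1 z) (flipF t2 z) := by
  rw [E0_iff_flip]
  exact ⟨symmDiff t2 t1, flip_flip_eq t1 t2 z⟩

lemma E0_flip' (t : Finset ℕ) (z : ℕ → Bool) : E0 z (flipF t z) :=
  E0_iff_flip.mpr ⟨t, rfl⟩

lemma c0_flip_pair {t1 t2 : Finset ℕ} (z : ℕ → Bool) (h12 : t1 ≠ t2) :
    c0 {flipF t1 z, flipF t2 z} = 0 ↔ (Even t1.card ↔ Even t2.card) := by
  have hne : flipF t1 z ≠ flipF t2 z := fun h => h12 (flipF_eq_iff.mp h)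
  have hE : E0 (flipF t1 z) (flipF t2 z) := E0_flip t1 t2 z
  have ht : ∀ i, flipF t1 z i ≠ flipF t2 z i ↔ i ∈ symmDiff t1 t2 :=
    fun i => flipF_ne_iff t1 t2 z i
  rw [c0_pair_eq_zero_iff hne hE, even_colorSum_iff hE ht, even_symmDiff_card]

section YSection

variable {Y : Set (ℕ → Bool)}

lemma flip_parity_unique (hinf : IsInfiniteCompleteSection E0 Y)
    (hmono : IsMonochromatic E0 2 c0 Y) (z : ℕ → Bool) {t1 t2 : Finset ℕ}
    (h1 : flipF t1 z ∈ Y) (h2 : flipF t2 z ∈ Y) : (Even t1.card ↔ Even t2.card) := by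
  by_contra hodd
  have h12 : t1 ≠ t2 := fun h => hodd (h ▸ Iff.rfl)
  obtain ⟨a, ha⟩ := hmono z
  -- a helper to apply monochromaticity to a pair of flips in Y
  have hpair : ∀ {s1 s2 : Finset ℕ}, s1 ≠ s2 → flipF s1 z ∈ Y → flipF s2 z ∈ Y →
      c0 {flipF s1 z, flipF s2 z} = a := by
    intro s1 s2 hs hY1 hY2
    apply ha
    · exact Finset.card_pair (fun h => hs (flipF_eq_iff.mp h))
    · intro w hw
      simp only [Finset.coe_insert, Finset.coe_singleton, Set.mem_insert_iff,
        Set.mem_singleton_iff] at hw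
      rcases hw with rfl | rfl
      · exact hY1
      · exact hY2
    · intro w hw
      simp only [Finset.mem_insert, Finset.mem_singleton] at hw
      rcases hw with rfl | rfl
      · exact E0_flip' s1 z
      · exact E0_flip' s2 z
  have ha1 : a = 1 := by
    have := hpair h12 h1 h2
    rcases c0_zero_or_one {flipF t1 z, flipF t2 z} with h0 | hone
    · exact absurd ((c0_flip_pair z h12).mp h0) hodd
    · rw [hone] at this; exact this.symm
  -- get a third point of Y in the class of z
  have hfin : ({flipF t1 z, flipF t2 z} : Set (ℕ → Bool)).Finite := by
    exact (Set.finite_singleton _).insert _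
  obtain ⟨y3, hy3⟩ := (((hinf z).diff hfin)).nonempty
  obtain ⟨⟨hy3Y, hy3E⟩, hy3ne⟩ := hy3
  obtain ⟨t3, rfl⟩ := E0_iff_flip.mp hy3E
  simp only [Set.mem_insert_iff, Set.mem_singleton_iff, not_or] at hy3ne
  have h31 : t3 ≠ t1 := fun h => hy3ne.1 (by rw [h])
  have h32 : t3 ≠ t2 := fun h => hy3ne.2 (by rw [h])
  by_cases hp : Even t3.card ↔ Even t1.card
  · have := hpair h31.symm h1 hy3Y
    rw [(c0_flip_pair z h31.symm).mpr hp.symm, ha1] at this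
    exact absurd this (by decide)
  · have hp2 : Even t3.card ↔ Even t2.card := by tauto
    have := hpair h32.symm h2 hy3Y
    rw [(c0_flip_pair z h32.symm).mpr hp2.symm, ha1] at this
    exact absurd this (by decide)

/-- the `F0`-saturation of `Y` -/
def ZOf (Y : Set (ℕ → Bool)) : Set (ℕ → Bool) :=
  {z | ∃ t : Finset ℕ, Even t.card ∧ flipF t z ∈ Y}

lemma key_flip_mem (hinf : IsInfiniteCompleteSection E0 Y)
    (hmono : IsMonochromatic E0 2 c0 Y) (t : Finset ℕ) (z : ℕ → Bool) :
    flipF t z ∈ ZOf Y ↔ (Even t.card ↔ z ∈ ZOf Y) := by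
  have hcs : ∀ w : ℕ → Bool, ∃ s : Finset ℕ, flipF s w ∈ Y := by
    intro w
    obtain ⟨y, hyY, hyE⟩ := (hinf w).nonempty
    obtain ⟨s, rfl⟩ := E0_iff_flip.mp hyE
    exact ⟨s, hyY⟩
  constructor
  · rintro ⟨s, hs, hsY⟩
    rw [flipF_flipF] at hsY
    by_cases ht : Even t.card
    · simp only [ht, true_iff]
      refine ⟨symmDiff s t, ?_, hsY⟩
      rw [even_symmDiff_card]
      simp [hs, ht]
    · simp only [ht, false_iff]
      rintro ⟨u, hu, huY⟩
      have := flip_parity_unique hinf hmono z (t1 := symmDiff s t) (t2 := u) hsY huY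
      rw [even_symmDiff_card] at this
      simp [hs, hu, ht] at this
  · intro hiff
    by_cases ht : Even t.card
    · obtain ⟨u, hu, huY⟩ := hiff.mp ht
      refine ⟨symmDiff u t, ?_, ?_⟩
      · rw [even_symmDiff_card]; simp [hu, ht]
      · rw [flipF_flipF, symmDiff_symmDiff_cancel_right]
        exact huY
    · have hz : z ∉ ZOf Y := fun hz => ht (hiff.mpr hz)
      obtain ⟨s, hsY⟩ := hcs z
      have hs : ¬ Even s.card := fun hs => hz ⟨s, hs, hsY⟩
      refine ⟨symmDiff s t, ?_, ?_⟩
      · rw [even_symmDiff_card]; simp [hs, ht]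
      · rw [flipF_flipF, symmDiff_symmDiff_cancel_right]
        exact hsY

end YSection

lemma measurable_flipF (t : Finset ℕ) : Measurable (flipF t) := by
  apply measurable_pi_lambda
  intro n
  exact Measurable.of_discrete.comp (measurable_pi_apply n)

lemma continuous_flipF (t : Finset ℕ) : Continuous (flipF t) := by
  apply continuous_pi
  intro n
  exact continuous_of_discreteTopology.comp (continuous_apply n)

lemma isOpenMap_flipF (t : Finset ℕ) : IsOpenMap (flipF t) := by
  intro U hU
  have h : flipF t '' U = flipF t ⁻¹' U :=
    congrFun (Set.image_eq_preimage_of_inverse (flipF_involutive t) (flipF_involutive t)) U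
  rw [h]
  exact hU.preimage (continuous_flipF t)

lemma isMeagre_preimage_flipF (t : Finset ℕ) {S : Set (ℕ → Bool)} (hS : IsMeagre S) :
    IsMeagre (flipF t ⁻¹' S) := by
  have htend := tendsto_residual_of_isOpenMap (continuous_flipF t) (isOpenMap_flipF t)
  unfold IsMeagre at hS ⊢
  rw [← Set.preimage_compl]
  exact htend hS

lemma measurableSet_ZOf {Y : Set (ℕ → Bool)} (hY : MeasurableSet Y) :
    MeasurableSet (ZOf Y) := by
  have : ZOf Y = ⋃ (t : Finset ℕ), ⋃ (_ : Even t.card), flipF t ⁻¹' Y := by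
    ext z
    simp [ZOf]
  rw [this]
  exact MeasurableSet.iUnion fun t => MeasurableSet.iUnion fun _ =>
    (measurable_flipF t) hY

lemma isMeagre_union {A B : Set (ℕ → Bool)} (hA : IsMeagre A) (hB : IsMeagre B) :
    IsMeagre (A ∪ B) := by
  unfold IsMeagre at *
  rw [Set.compl_union]
  exact Filter.inter_mem hA hB

theorem no_section (Y : Set (ℕ → Bool)) (hYm : MeasurableSet Y)
    (hinf : IsInfiniteCompleteSection E0 Y) (hmono : IsMonochromatic E0 2 c0 Y) : False := by
  set Z := ZOf Y with hZdef
  have hkey := key_flip_mem hinf hmono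
  have hZm : MeasurableSet Z := measurableSet_ZOf hYm
  obtain ⟨U, hUo, hUeq⟩ := hZm.baireMeasurableSet.residualEq_isOpen
  have hM : {x | x ∈ Z ↔ x ∈ U} ∈ residual (ℕ → Bool) := by
    filter_upwards [hUeq] with x hx
    exact iff_of_eq hx
  have hMc : IsMeagre {x | ¬ (x ∈ Z ↔ x ∈ U)} := by
    unfold IsMeagre
    have : {x | ¬ (x ∈ Z ↔ x ∈ U)}ᶜ = {x | x ∈ Z ↔ x ∈ U} := by
      ext x; simp
    rw [this]
    exact hM
  -- a single coordinate flip exchanges Z and its complement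
  have hflip : ∀ (n : ℕ), flipF {n} ⁻¹' Z = Zᶜ := by
    intro n
    ext x
    have := hkey {n} x
    simp only [Finset.card_singleton] at this
    simp only [Set.mem_preimage, Set.mem_compl_iff]
    rw [this]
    simp [Nat.even_iff, hZdef]
  rcases Set.eq_empty_or_nonempty U with rfl | ⟨f0, hf0U⟩
  · -- U empty : Z is meagre, hence so is its complement, contradiction
    have hZmeag : IsMeagre Z := by
      apply hMc.mono
      intro x hx
      simp only [Set.mem_setOf_eq]
      intro h
      exact (h.mp hx)
    have hZc : IsMeagre Zᶜ := by
      rw [← hflip 0]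
      exact isMeagre_preimage_flipF {0} hZmeag
    have huniv : IsMeagre (Set.univ : Set (ℕ → Bool)) := by
      apply (isMeagre_union hZmeag hZc).mono
      intro x _
      by_cases hx : x ∈ Z
      · exact Or.inl hx
      · exact Or.inr hx
    have hdense : Dense ((Set.univ : Set (ℕ → Bool))ᶜ) := dense_of_mem_residual huniv
    obtain ⟨x, -, hx⟩ := hdense.inter_open_nonempty Set.univ isOpen_univ
      ⟨fun _ => false, trivial⟩
    exact hx trivial
  · -- U nonempty : find a basic clopen set C ⊆ U
    obtain ⟨I, u, hu, hpi⟩ := isOpen_pi_iff.mp hUo f0 hf0U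
    set C : Set (ℕ → Bool) := {z | ∀ i ∈ I, z i = f0 i} with hCdef
    have hCU : C ⊆ U := by
      intro z hz
      apply hpi
      intro i hi
      rw [hz i hi]
      exact (hu i hi).2
    have hCopen : IsOpen C := by
      have : C = ⋂ i ∈ (I : Set ℕ), (fun z : ℕ → Bool => z i) ⁻¹' {f0 i} := by
        ext z; simp [hCdef]
      rw [this]
      exact (I.finite_toSet).isOpen_biInter fun i _ =>
        (isOpen_discrete _).preimage (continuous_apply i)
    have hf0C : f0 ∈ C := fun i _ => rfl
    -- pick a coordinate not in I
    set n : ℕ := I.sup id + 1 with hn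
    have hnI : n ∉ I := by
      intro h
      have := Finset.le_sup (f := id) h
      simp only [id] at this
      omega
    have hCflip : flipF {n} ⁻¹' C = C := by
      ext z
      simp only [Set.mem_preimage, hCdef, Set.mem_setOf_eq]
      constructor <;> intro h i hi <;>
        · have hin : i ≠ n := fun he => hnI (he ▸ hi)
          have := h i hi
          simpa [flipF, Finset.mem_singleton, hin] using this
    have h1 : IsMeagre (Zᶜ ∩ C) := by
      apply hMc.mono
      rintro x ⟨hxZ, hxC⟩
      simp only [Set.mem_setOf_eq]
      intro h
      exact hxZ (h.mpr (hCU hxC))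
    have h2 : Z ∩ C = flipF {n} ⁻¹' (Zᶜ ∩ C) := by
      rw [Set.preimage_inter, Set.preimage_compl, hflip n, compl_compl, hCflip]
    have h3 : IsMeagre (Z ∩ C) := by
      rw [h2]
      exact isMeagre_preimage_flipF {n} h1
    have h4 : IsMeagre C := by
      apply (isMeagre_union h3 h1).mono
      intro x hx
      by_cases hxZ : x ∈ Z
      · exact Or.inl ⟨hxZ, hx⟩
      · exact Or.inr ⟨hxZ, hx⟩
    have hdense : Dense Cᶜ := dense_of_mem_residual h4
    obtain ⟨x, hxC, hxCc⟩ := hdense.inter_open_nonempty C hCopen ⟨f0, hf0C⟩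
    exact hxCc hxC

lemma measurableSet_eq_bool {α : Type*} [MeasurableSpace α] {f g : α → Bool}
    (hf : Measurable f) (hg : Measurable g) : MeasurableSet {x | f x = g x} := by
  have h : {x | f x = g x} = ⋃ b : Bool, f ⁻¹' {b} ∩ g ⁻¹' {b} := by
    ext x
    simp only [Set.mem_setOf_eq, Set.mem_iUnion, Set.mem_inter_iff, Set.mem_preimage,
      Set.mem_singleton_iff]
    constructor
    · intro h; exact ⟨f x, rfl, h.symm⟩
    · rintro ⟨b, hb1, hb2⟩; rw [hb1, hb2]
  rw [h]
  exact MeasurableSet.iUnion fun b =>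
    (hf (measurableSet_singleton b)).inter (hg (measurableSet_singleton b))

lemma range_toFinset (v : Fin 2 → (ℕ → Bool)) :
    (Set.finite_range v).toFinset = {v 0, v 1} := by
  ext x
  simp only [Set.Finite.mem_toFinset, Set.mem_range, Fin.exists_fin_two,
    Finset.mem_insert, Finset.mem_singleton]
  constructor
  · rintro (h | h) <;> [left; right] <;> exact h.symm
  · rintro (h | h) <;> [left; right] <;> exact h.symm

lemma c0_singleton (x : ℕ → Bool) : c0 {x} = 1 := by
  unfold c0
  rw [if_neg]
  rintro ⟨a, b, hab, heq, -, -⟩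
  have ha : a ∈ ({x} : Finset (ℕ → Bool)) := by
    rw [heq]; exact Finset.mem_insert_self a {b}
  have hb : b ∈ ({x} : Finset (ℕ → Bool)) := by
    rw [heq]; exact Finset.mem_insert.mpr (Or.inr (Finset.mem_singleton_self b))
  rw [Finset.mem_singleton] at ha hb
  exact hab (ha.trans hb.symm)

theorem c0_is_borel : IsBorelColoring 2 c0 := by
  unfold IsBorelColoring
  set S : Set (Fin 2 → (ℕ → Bool)) :=
    ⋃ (t : Finset ℕ) (_ : t.Nonempty ∧ Even t.card), {v | v 1 = flipF t (v 0)} with hS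
  have hSm : MeasurableSet S := by
    refine MeasurableSet.iUnion fun t => MeasurableSet.iUnion fun _ => ?_
    have h : {v : Fin 2 → (ℕ → Bool) | v 1 = flipF t (v 0)}
        = ⋂ m : ℕ, {v | v 1 m = flipF t (v 0) m} := by
      ext v
      simp only [Set.mem_setOf_eq, Set.mem_iInter]
      exact ⟨fun h m => by rw [h], fun h => funext h⟩
    rw [h]
    refine MeasurableSet.iInter fun m => ?_
    have h1 : Measurable fun v : Fin 2 → (ℕ → Bool) => v 1 m :=
      (measurable_pi_apply m).comp (measurable_pi_apply 1)
    have h2 : Measurable fun v : Fin 2 → (ℕ → Bool) => flipF t (v 0) m := by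
      have he : (fun v : Fin 2 → (ℕ → Bool) => flipF t (v 0) m)
          = (fun b => xor (decide (m ∈ t)) b) ∘ (fun v : Fin 2 → (ℕ → Bool) => v 0 m) := rfl
      rw [he]
      exact Measurable.of_discrete.comp ((measurable_pi_apply m).comp (measurable_pi_apply 0))
    exact measurableSet_eq_bool h1 h2
  have hfun : (fun v : Fin 2 → (ℕ → Bool) => c0 (Set.finite_range v).toFinset)
      = fun v => if v ∈ S then (0 : Fin 2) else 1 := by
    funext v
    rw [range_toFinset]
    by_cases h01 : v 0 = v 1
    · have hsing : ({v 0, v 1} : Finset (ℕ → Bool)) = {v 0} := by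
        rw [← h01]; simp
      rw [hsing, c0_singleton, if_neg]
      intro hmem
      simp only [hS, Set.mem_iUnion] at hmem
      obtain ⟨t, ⟨htne, -⟩, hteq⟩ := hmem
      have heq : flipF ∅ (v 0) = flipF t (v 0) := by
        rw [flipF_empty]; exact h01.trans hteq
      exact htne.ne_empty (flipF_eq_iff.mp heq).symm
    · by_cases hmem : v ∈ S
      · rw [if_pos hmem]
        simp only [hS, Set.mem_iUnion] at hmem
        obtain ⟨t, ⟨htne, hte⟩, hteq⟩ := hmem
        have h0 : (∅ : Finset ℕ) ≠ t := fun h => htne.ne_empty h.symm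
        have hc := (c0_flip_pair (v 0) h0).mpr (by simp [hte])
        rw [flipF_empty, ← hteq] at hc
        exact hc
      · rw [if_neg hmem]
        rcases c0_zero_or_one {v 0, v 1} with h0 | h1
        · exfalso
          have hE : E0 (v 0) (v 1) := by
            by_cases hcond : ∃ x y : ℕ → Bool, x ≠ y ∧ ({v 0, v 1} : Finset (ℕ → Bool)) = {x, y}
                ∧ E0 x y ∧ Even (colorSum x y)
            · obtain ⟨a, b, hab, heq, hEab, -⟩ := hcond
              rcases pair_eq_pair' h01 heq hab with ⟨rfl, rfl⟩ | ⟨rfl, rfl⟩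
              · exact hEab
              · exact E0_symm hEab
            · unfold c0 at h0
              rw [if_neg hcond] at h0
              exact absurd h0 (by decide)
          obtain ⟨t, hteq⟩ := E0_iff_flip.mp hE
          have htne : t.Nonempty := by
            rcases Finset.eq_empty_or_nonempty t with rfl | h
            · rw [flipF_empty] at hteq
              exact absurd hteq.symm h01
            · exact h
          have hte : Even t.card := by
            have heven := (c0_pair_eq_zero_iff h01 hE).mp h0
            rwa [even_colorSum_iff hE (flip_diff hteq)] at heven
          exact hmem (by
            simp only [hS, Set.mem_iUnion]
            exact ⟨t, ⟨htne, hte⟩, hteq⟩)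
        · exact h1
  rw [hfun]
  exact Measurable.ite hSm measurable_const measurable_const


/-- The parity coloring `c0` is a Borel `E₀`-coloring of dimension `2` by `2` colors, and
there is no Borel `E₀`-monochromatic infinite complete section for it. -/
theorem no_monochromatic_section_for_parity_coloring :
    IsBorelColoring 2 c0 ∧
    ¬ ∃ Y : Set (ℕ → Bool), MeasurableSet Y ∧ IsInfiniteCompleteSection E0 Y ∧
      IsMonochromatic E0 2 c0 Y := by
  refine ⟨c0_is_borel, ?_⟩
  rintro ⟨Y, hYm, hinf, hmono⟩
  exact no_section Y hYm hinf hmono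
end
end

section
/- Let E_0 be the eventual-agreement equivalence relation on the Cantor space 2^ℕ. For all integers n, k > 1, there exists a Borel E_0-coloring of dimension n by k colors that admits no Borel E_0-monochromatic infinite complete section; that is, the strong Borel Ramsey property E_0 →_B (E_0)^n_k fails for all n, k > 1. -/
open Classical

noncomputable section

/-! ### Auxiliary machinery for the proof -/

section Aux

open Topology Filter

/-- Flip the coordinates in `s`. -/
def flipS (s : Finset ℕ) (x : ℕ → Bool) : ℕ → Bool := fun i => if i ∈ s then !(x i) else x i

lemma flipS_empty (x : ℕ → Bool) : flipS ∅ x = x := by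
  funext i; simp [flipS]

lemma flipS_flipS (s t : Finset ℕ) (x : ℕ → Bool) :
    flipS s (flipS t x) = flipS (symmDiff s t) x := by
  funext i
  by_cases hs : i ∈ s <;> by_cases ht : i ∈ t <;>
    simp [flipS, hs, ht, Finset.mem_symmDiff]

lemma flipS_involutive (s : Finset ℕ) : Function.Involutive (flipS s) := by
  intro x; rw [flipS_flipS, symmDiff_self]; exact flipS_empty x

lemma flipS_inj {s t : Finset ℕ} {x : ℕ → Bool} (h : flipS s x = flipS t x) : s = t := by
  ext i
  have hi := congrFun h i
  by_cases hs : i ∈ s <;> by_cases ht : i ∈ t <;>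
    simp_all [flipS, hs, ht]

lemma E0_iff_exists (x y : ℕ → Bool) : E0 x y ↔ ∃ s : Finset ℕ, y = flipS s x := by
  constructor
  · rintro ⟨n, hn⟩
    refine ⟨(Finset.range n).filter (fun i => x i ≠ y i), ?_⟩
    funext i
    by_cases hi : i ∈ (Finset.range n).filter (fun i => x i ≠ y i)
    · simp only [flipS, if_pos hi]
      simp only [Finset.mem_filter, Finset.mem_range] at hi
      cases hx : x i <;> cases hy : y i <;> simp_all
    · simp only [flipS, if_neg hi]
      simp only [Finset.mem_filter, Finset.mem_range, not_and, not_not] at hi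
      by_cases hlt : i < n
      · exact (hi hlt).symm
      · exact (hn i (le_of_not_gt hlt)).symm
  · rintro ⟨s, rfl⟩
    refine ⟨(s.sup id) + 1, fun m hm => ?_⟩
    have hms : m ∉ s := fun hmem => by
      have := Finset.le_sup (f := id) hmem
      simp only [id] at this
      omega
    simp [flipS, hms]

lemma colorSum_parity (s : Finset ℕ) (x : ℕ → Bool) :
    Even (colorSum x (flipS s x)) ↔ Even s.card := by
  set y := flipS s x with hy
  have hE : ∃ n : ℕ, ∀ m ≥ n, x m = y m := (E0_iff_exists x y).2 ⟨s, rfl⟩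
  rw [colorSum, dif_pos hE]
  set N := Nat.find hE with hN
  have hNspec : ∀ m ≥ N, x m = y m := Nat.find_spec hE
  have hsub : s ⊆ Finset.range N := by
    intro i hi
    rw [Finset.mem_range]
    by_contra hge
    have := hNspec i (le_of_not_gt hge)
    have : x i = !(x i) := by
      conv_lhs => rw [this]
      simp [hy, flipS, hi]
    simp at this
  have hcast : ((((Finset.range N).sum fun i => (x i).toNat) +
      ((Finset.range N).sum fun i => (y i).toNat) : ℕ) : ZMod 2) = (s.card : ZMod 2) := by
    push_cast
    rw [← Finset.sum_add_distrib]
    have : ∀ i ∈ Finset.range N,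
        (((x i).toNat : ZMod 2) + ((y i).toNat : ZMod 2)) =
          (if i ∈ s then (1 : ZMod 2) else 0) := by
      intro i _
      by_cases hi : i ∈ s
      · have : y i = !(x i) := by simp [hy, flipS, hi]
        rw [this, if_pos hi]
        cases x i <;> simp <;> decide
      · have : y i = x i := by simp [hy, flipS, hi]
        rw [this, if_neg hi]
        cases x i <;> simp <;> decide
    rw [Finset.sum_congr rfl this, Finset.sum_ite_mem]
    rw [Finset.inter_eq_right.mpr hsub]
    simp
  have h2 : ∀ m : ℕ, Even m ↔ ((m : ZMod 2) = 0) := by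
    intro m
    rw [even_iff_two_dvd, ZMod.natCast_eq_zero_iff]
  rw [h2, h2, hcast]

lemma F0_iff (x y : ℕ → Bool) : F0 x y ↔ ∃ s : Finset ℕ, Even s.card ∧ y = flipS s x := by
  constructor
  · rintro (rfl | ⟨hE, hEv⟩)
    · exact ⟨∅, by simp, (flipS_empty x).symm⟩
    · obtain ⟨s, rfl⟩ := (E0_iff_exists x y).1 hE
      exact ⟨s, (colorSum_parity s x).1 hEv, rfl⟩
  · rintro ⟨s, hev, rfl⟩
    exact Or.inr ⟨(E0_iff_exists x _).2 ⟨s, rfl⟩, (colorSum_parity s x).2 hev⟩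

lemma even_card_symmDiff (s t : Finset ℕ) :
    Even (symmDiff s t).card ↔ (Even s.card ↔ Even t.card) := by
  have h1 : (symmDiff s t).card = (s \ t).card + (t \ s).card := by
    rw [symmDiff_def]
    exact Finset.card_union_of_disjoint disjoint_sdiff_sdiff
  have h2 := Finset.card_sdiff_add_card_inter s t
  have h3 := Finset.card_sdiff_add_card_inter t s
  have h4 : (s ∩ t).card = (t ∩ s).card := by rw [Finset.inter_comm]
  rw [Nat.even_iff, Nat.even_iff, Nat.even_iff]
  omega

lemma F0_flip_iff (x : ℕ → Bool) (s t : Finset ℕ) :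
    F0 (flipS s x) (flipS t x) ↔ (Even s.card ↔ Even t.card) := by
  rw [F0_iff]
  constructor
  · rintro ⟨u, hu, heq⟩
    rw [flipS_flipS] at heq
    have ht : symmDiff u s = t := flipS_inj heq.symm
    have h := even_card_symmDiff u s
    rw [ht] at h
    tauto
  · intro h
    refine ⟨symmDiff t s, ?_, ?_⟩
    · rw [even_card_symmDiff]; tauto
    · rw [flipS_flipS, symmDiff_symmDiff_cancel_right]

lemma F0_flip_right (x : ℕ → Bool) (s : Finset ℕ) : F0 x (flipS s x) ↔ Even s.card := by
  have h := F0_flip_iff x ∅ s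
  rw [flipS_empty] at h
  rw [h]
  simp

lemma F0_refl (x : ℕ → Bool) : F0 x x := Or.inl rfl

lemma F0_symm {x y : ℕ → Bool} (h : F0 x y) : F0 y x := by
  rw [F0_iff] at h ⊢
  obtain ⟨s, hs, rfl⟩ := h
  exact ⟨s, hs, (flipS_involutive s x).symm⟩

lemma F0_trans {x y z : ℕ → Bool} (h1 : F0 x y) (h2 : F0 y z) : F0 x z := by
  rw [F0_iff] at h1 h2 ⊢
  obtain ⟨s, hs, rfl⟩ := h1
  obtain ⟨t, ht, rfl⟩ := h2
  rw [flipS_flipS]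
  exact ⟨symmDiff t s, (even_card_symmDiff t s).2 (by tauto), rfl⟩

lemma measurable_flipS (s : Finset ℕ) : Measurable (flipS s) := by
  apply measurable_pi_lambda
  intro i
  by_cases hi : i ∈ s
  · simp only [flipS, if_pos hi]
    exact (measurable_of_countable Bool.not).comp (measurable_pi_apply i)
  · simp only [flipS, if_neg hi]
    exact measurable_pi_apply i

lemma continuous_flipS (s : Finset ℕ) : Continuous (flipS s) := by
  apply continuous_pi
  intro i
  by_cases hi : i ∈ s
  · simp only [flipS, if_pos hi]
    exact Continuous.comp (continuous_of_discreteTopology (f := Bool.not)) (continuous_apply i)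
  · simp only [flipS, if_neg hi]
    exact continuous_apply i

/-- `flipS s` as a homeomorphism. -/
def flipHomeo (s : Finset ℕ) : (ℕ → Bool) ≃ₜ (ℕ → Bool) where
  toEquiv := (flipS_involutive s).toPerm
  continuous_toFun := continuous_flipS s
  continuous_invFun := continuous_flipS s

lemma isOpenMap_flipS (s : Finset ℕ) : IsOpenMap (flipS s) := (flipHomeo s).isOpenMap

lemma measurableSet_eq_flip (n : ℕ) (i j : Fin n) (s : Finset ℕ) :
    MeasurableSet {v : Fin n → (ℕ → Bool) | v j = flipS s (v i)} := by
  have : {v : Fin n → (ℕ → Bool) | v j = flipS s (v i)} =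
      ⋂ m : ℕ, {v : Fin n → (ℕ → Bool) | v j m = flipS s (v i) m} := by
    ext v
    simp only [Set.mem_setOf_eq, Set.mem_iInter]
    exact ⟨fun h m => by rw [h], fun h => funext h⟩
  rw [this]
  apply MeasurableSet.iInter
  intro m
  have hf : Measurable fun v : Fin n → (ℕ → Bool) => v j m :=
    (measurable_pi_apply m).comp (measurable_pi_apply j)
  have hg : Measurable fun v : Fin n → (ℕ → Bool) => flipS s (v i) m :=
    ((measurable_pi_apply m).comp (measurable_flipS s)).comp (measurable_pi_apply i)
  have : {v : Fin n → (ℕ → Bool) | v j m = flipS s (v i) m} =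
      ⋃ b : Bool, ((fun v : Fin n → (ℕ → Bool) => v j m) ⁻¹' {b}) ∩
        ((fun v : Fin n → (ℕ → Bool) => flipS s (v i) m) ⁻¹' {b}) := by
    ext v
    simp only [Set.mem_setOf_eq, Set.mem_iUnion, Set.mem_inter_iff, Set.mem_preimage,
      Set.mem_singleton_iff]
    constructor
    · intro h; exact ⟨v j m, rfl, h.symm⟩
    · rintro ⟨b, hb1, hb2⟩; rw [hb1, hb2]
  rw [this]
  exact MeasurableSet.iUnion fun b =>
    (hf (measurableSet_singleton b)).inter (hg (measurableSet_singleton b))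

lemma measurableSet_F0_pair (n : ℕ) (i j : Fin n) :
    MeasurableSet {v : Fin n → (ℕ → Bool) | F0 (v i) (v j)} := by
  have : {v : Fin n → (ℕ → Bool) | F0 (v i) (v j)} =
      ⋃ (s : Finset ℕ) (_ : Even s.card), {v : Fin n → (ℕ → Bool) | v j = flipS s (v i)} := by
    ext v
    simp only [Set.mem_setOf_eq, Set.mem_iUnion, F0_iff]
    tauto
  rw [this]
  exact MeasurableSet.iUnion fun s => MeasurableSet.iUnion fun _ => measurableSet_eq_flip n i j s

/-- Membership in an infinite set admits `n`-element supersets of any given finite subset. -/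
lemma exists_superset_card_eq_of_infinite {α : Type*} {S : Set α} (hS : S.Infinite)
    (t : Finset α) (ht : ↑t ⊆ S) {n : ℕ} (hn : t.card ≤ n) :
    ∃ A : Finset α, t ⊆ A ∧ ↑A ⊆ S ∧ A.card = n := by
  obtain ⟨u, hu, hucard⟩ := (hS.diff t.finite_toSet).exists_subset_card_eq (n - t.card)
  have hdisj : Disjoint t u := by
    rw [Finset.disjoint_left]
    intro a hat hau
    exact (hu hau).2 hat
  refine ⟨t ∪ u, Finset.subset_union_left, ?_, ?_⟩
  · rw [Finset.coe_union]
    exact Set.union_subset ht (hu.trans Set.diff_subset)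
  · rw [Finset.card_union_of_disjoint hdisj, hucard]
    omega

end Aux

/-- For all integers `n, k > 1`, the strong Borel Ramsey property `E₀ →_B (E₀)^n_k` fails:
there is a Borel `E₀`-coloring of dimension `n` by `k` colors with no Borel
`E₀`-monochromatic infinite complete section. -/
theorem strong_borel_ramsey_fails_for_E0 :
    ∀ n k : ℕ, 1 < n → 1 < k → ¬ StrongBorelRamsey E0 n k := by
  intro n k hn hk hSR
  classical
  set a0 : Fin k := ⟨0, by omega⟩ with ha0
  set a1 : Fin k := ⟨1, by omega⟩ with ha1
  set c : Finset (ℕ → Bool) → Fin k :=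
    fun A => if ∀ x ∈ A, ∀ y ∈ A, F0 x y then a0 else a1 with hc
  have hne01 : a1 ≠ a0 := by simp [ha0, ha1, Fin.ext_iff]
  have hborel : IsBorelColoring n c := by
    have heq : (fun v : Fin n → (ℕ → Bool) => c (Set.finite_range v).toFinset) =
        fun v => if ∀ i j : Fin n, F0 (v i) (v j) then a0 else a1 := by
      funext v
      have hmem : ∀ x, x ∈ (Set.finite_range v).toFinset ↔ ∃ i, v i = x := by
        intro x; rw [Set.Finite.mem_toFinset]; exact Set.mem_range
      by_cases h : ∀ i j : Fin n, F0 (v i) (v j)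
      · rw [if_pos h, hc]
        dsimp only
        rw [if_pos]
        intro x hx y hy
        obtain ⟨i, rfl⟩ := (hmem x).1 hx
        obtain ⟨j, rfl⟩ := (hmem y).1 hy
        exact h i j
      · rw [if_neg h, hc]
        dsimp only
        rw [if_neg]
        intro hall
        exact h fun i j => hall _ ((hmem _).2 ⟨i, rfl⟩) _ ((hmem _).2 ⟨j, rfl⟩)
    rw [IsBorelColoring, heq]
    apply Measurable.ite ?_ measurable_const measurable_const
    have hset : {v : Fin n → (ℕ → Bool) | ∀ i j : Fin n, F0 (v i) (v j)} =
        ⋂ (i : Fin n) (j : Fin n), {v | F0 (v i) (v j)} := by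
      ext v; simp
    rw [hset]
    exact MeasurableSet.iInter fun i => MeasurableSet.iInter fun j => measurableSet_F0_pair n i j
  obtain ⟨Y, hYmeas, hYinf, hYmono⟩ := hSR c hborel
  -- Key structural fact: any two points of `Y` in the same `E₀`-class are `F₀`-related.
  have key : ∀ x y z : ℕ → Bool, y ∈ Y → z ∈ Y → E0 x y → E0 x z → F0 y z := by
    intro x y z hy hz hxy hxz
    obtain ⟨a, ha⟩ := hYmono x
    have hT : {w | w ∈ Y ∧ E0 x w}.Infinite := hYinf x
    have hTsub : {w | w ∈ Y ∧ E0 x w} ⊆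
        {w | (w ∈ Y ∧ E0 x w) ∧ F0 x w} ∪ {w | (w ∈ Y ∧ E0 x w) ∧ ¬ F0 x w} := by
      intro w hw
      by_cases hF : F0 x w
      · exact Or.inl ⟨hw, hF⟩
      · exact Or.inr ⟨hw, hF⟩
    have hcases : {w | (w ∈ Y ∧ E0 x w) ∧ F0 x w}.Infinite ∨
        {w | (w ∈ Y ∧ E0 x w) ∧ ¬ F0 x w}.Infinite := by
      by_contra hcon
      push_neg at hcon
      exact hT ((hcon.1.union hcon.2).subset hTsub)
    obtain ⟨T', hT'inf, hT'sub, hT'pair⟩ :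
        ∃ T' : Set (ℕ → Bool), T'.Infinite ∧ T' ⊆ {w | w ∈ Y ∧ E0 x w} ∧
          ∀ u ∈ T', ∀ w ∈ T', F0 u w := by
      rcases hcases with h | h
      · refine ⟨_, h, fun w hw => hw.1, ?_⟩
        rintro u ⟨hu, hFu⟩ w ⟨hw, hFw⟩
        exact F0_trans (F0_symm hFu) hFw
      · refine ⟨_, h, fun w hw => hw.1, ?_⟩
        rintro u ⟨⟨huY, huE⟩, hFu⟩ w ⟨⟨hwY, hwE⟩, hFw⟩
        obtain ⟨su, rfl⟩ := (E0_iff_exists x u).1 huE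
        obtain ⟨sw, rfl⟩ := (E0_iff_exists x w).1 hwE
        rw [F0_flip_right] at hFu hFw
        rw [F0_flip_iff]
        tauto
    obtain ⟨A0, hA0sub, hA0card⟩ := hT'inf.exists_subset_card_eq n
    have hA0Y : ↑A0 ⊆ Y := fun w hw => (hT'sub (hA0sub hw)).1
    have hA0E : ∀ w ∈ A0, E0 x w := fun w hw => (hT'sub (hA0sub hw)).2
    have h1 : c A0 = a := ha A0 hA0card hA0Y hA0E
    have h2 : c A0 = a0 := by
      rw [hc]
      dsimp only
      rw [if_pos]
      intro u hu w hw
      exact hT'pair u (hA0sub hu) w (hA0sub hw)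
    have haa : a = a0 := by rw [← h1, h2]
    have hyzT : ↑({y, z} : Finset (ℕ → Bool)) ⊆ {w | w ∈ Y ∧ E0 x w} := by
      intro w hw
      simp only [Finset.coe_insert, Finset.coe_singleton, Set.mem_insert_iff,
        Set.mem_singleton_iff] at hw
      rcases hw with rfl | rfl
      · exact ⟨hy, hxy⟩
      · exact ⟨hz, hxz⟩
    have hcard2 : ({y, z} : Finset (ℕ → Bool)).card ≤ n := by
      have h2' : ({y, z} : Finset (ℕ → Bool)).card ≤ 2 :=
        (Finset.card_insert_le _ _).trans (by simp)
      omega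
    obtain ⟨A, hsubA, hAT, hAcard⟩ :=
      exists_superset_card_eq_of_infinite hT ({y, z} : Finset (ℕ → Bool)) hyzT hcard2
    have h3 : c A = a := ha A hAcard (fun w hw => (hAT hw).1) (fun w hw => (hAT hw).2)
    rw [haa] at h3
    by_cases hcond : ∀ u ∈ A, ∀ w ∈ A, F0 u w
    · exact hcond y (hsubA (by simp)) z (hsubA (by simp))
    · rw [hc] at h3
      dsimp only at h3
      rw [if_neg hcond] at h3
      exact absurd h3 hne01
  -- The Borel set `B`.
  set B : Set (ℕ → Bool) := {x | ∀ s : Finset ℕ, Odd s.card → flipS s x ∉ Y} with hB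
  have hBmeas : MeasurableSet B := by
    have hBeq : B = ⋂ (s : Finset ℕ) (_ : Odd s.card), flipS s ⁻¹' Yᶜ := by
      ext x; simp [hB]
    rw [hBeq]
    exact MeasurableSet.iInter fun s =>
      MeasurableSet.iInter fun _ => (measurable_flipS s) hYmeas.compl
  have hBchar : ∀ x, x ∈ B ↔ ∀ y ∈ Y, E0 x y → F0 x y := by
    intro x
    constructor
    · intro hxB y hyY hE
      obtain ⟨t, rfl⟩ := (E0_iff_exists x y).1 hE
      rcases Nat.even_or_odd t.card with he | ho
      · exact (F0_flip_right x t).2 he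
      · exact absurd hyY (hxB t ho)
    · intro hforall s hodd hmem
      have hE : E0 x (flipS s x) := (E0_iff_exists _ _).2 ⟨s, rfl⟩
      have := (F0_flip_right x s).1 (hforall _ hmem hE)
      exact (Nat.not_even_iff_odd.mpr hodd) this
  have hclaim : ∀ x y₀, y₀ ∈ Y → E0 x y₀ → (x ∈ B ↔ F0 x y₀) := by
    intro x y₀ hy₀Y hy₀E
    constructor
    · intro hxB
      exact (hBchar x).1 hxB y₀ hy₀Y hy₀E
    · intro hF
      rw [hBchar]
      intro y hyY hyE
      exact F0_trans hF (key x y₀ y hy₀Y hyY hy₀E hyE)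
  have hBflip : ∀ (m : ℕ) (x : ℕ → Bool), flipS {m} x ∈ B ↔ x ∉ B := by
    intro m x
    obtain ⟨y₀, hy₀Y, hy₀E⟩ := (hYinf x).nonempty
    obtain ⟨t, rfl⟩ := (E0_iff_exists x y₀).1 hy₀E
    have hxB : x ∈ B ↔ Even t.card := by
      rw [hclaim x _ hy₀Y hy₀E, F0_flip_right]
    have hE' : E0 (flipS {m} x) (flipS t x) := by
      rw [E0_iff_exists]
      exact ⟨symmDiff t {m}, by rw [flipS_flipS, symmDiff_symmDiff_cancel_right]⟩
    have hxB' : flipS {m} x ∈ B ↔ ¬ Even t.card := by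
      have h1m : flipS {m} x ∈ B ↔ F0 (flipS {m} x) (flipS t x) := hclaim _ _ hy₀Y hE'
      rw [h1m, F0_flip_iff]
      simp [Nat.even_iff]
    rw [hxB', hxB]
  -- Baire category argument.
  obtain ⟨U, hUopen, hUeq⟩ := hBmeas.baireMeasurableSet.residualEq_isOpen
  have hM : IsMeagre (symmDiff B U) := by
    rw [IsMeagre]
    have h' : ∀ᶠ x in residual (ℕ → Bool), x ∈ (symmDiff B U)ᶜ := by
      apply hUeq.mono
      intro x hx
      simp only [eq_iff_iff] at hx
      simp only [Set.mem_compl_iff, Set.mem_symmDiff]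
      tauto
    rwa [Filter.eventually_iff] at h'
  have final : ∀ (V : Set (ℕ → Bool)) (m : ℕ), IsOpen V → V.Nonempty →
      (∀ x, flipS {m} x ∈ V ↔ x ∈ V) →
      (IsMeagre (V ∩ B) ∨ IsMeagre (V \ B)) → False := by
    intro V m hVopen hVne hVinv hmeager
    have hpre : ∀ S : Set (ℕ → Bool), IsMeagre S → IsMeagre (flipS {m} ⁻¹' S) := fun S hS =>
      IsMeagre.preimage_of_isOpenMap (continuous_flipS _) (isOpenMap_flipS _) hS
    have hpreB : flipS {m} ⁻¹' B = Bᶜ := by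
      ext x
      simp only [Set.mem_preimage, Set.mem_compl_iff]
      exact hBflip m x
    have hpreV : flipS {m} ⁻¹' V = V := by
      ext x
      exact hVinv x
    have hboth : IsMeagre (V ∩ B) ∧ IsMeagre (V \ B) := by
      rcases hmeager with h | h
      · refine ⟨h, ?_⟩
        have h2 := hpre _ h
        rw [Set.preimage_inter, hpreV, hpreB] at h2
        rwa [← Set.diff_eq] at h2
      · refine ⟨?_, h⟩
        have h2 := hpre _ h
        rw [Set.preimage_diff, hpreV, hpreB] at h2
        rwa [Set.diff_compl] at h2
    have hV : IsMeagre V := by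
      have hu : IsMeagre ((V ∩ B) ∪ (V \ B)) := by
        rw [IsMeagre, Set.compl_union]
        exact Filter.inter_mem hboth.1 hboth.2
      rwa [Set.inter_union_diff] at hu
    have hdense : Dense Vᶜ := dense_of_mem_residual hV
    obtain ⟨x, hx1, hx2⟩ := hdense.inter_open_nonempty V hVopen hVne
    exact hx2 hx1
  rcases Set.eq_empty_or_nonempty U with hU | hU
  · apply final Set.univ 0 isOpen_univ Set.univ_nonempty (fun x => by simp)
    left
    rw [Set.univ_inter]
    apply hM.mono
    intro w hw
    rw [Set.mem_symmDiff]
    exact Or.inl ⟨hw, by rw [hU]; exact Set.notMem_empty w⟩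
  · obtain ⟨x₀, hx₀U⟩ := hU
    obtain ⟨I, u, hIu, hpi⟩ := isOpen_pi_iff.1 hUopen x₀ hx₀U
    set V : Set (ℕ → Bool) := {y | ∀ i ∈ I, y i = x₀ i} with hVdef
    have hVsub : V ⊆ U := by
      intro y hy
      apply hpi
      rw [Set.mem_pi]
      intro i hi
      rw [hy i hi]
      exact (hIu i hi).2
    have hVopen : IsOpen V := by
      have hVeq : V = ⋂ i ∈ I, {y : ℕ → Bool | y i = x₀ i} := by
        ext y; simp [hVdef]
      rw [hVeq]
      refine isOpen_biInter_finset fun i _ => ?_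
      show IsOpen ((fun y : ℕ → Bool => y i) ⁻¹' {x₀ i})
      exact IsOpen.preimage (continuous_apply (A := fun _ : ℕ => Bool) i)
        (isOpen_discrete {x₀ i})
    have hVne : V.Nonempty := ⟨x₀, fun i _ => rfl⟩
    set m := I.sup id + 1 with hm
    have hmI : m ∉ I := fun h => by
      have := Finset.le_sup (f := id) h
      simp only [id] at this
      omega
    have hcoord : ∀ x : ℕ → Bool, ∀ i ∈ I, flipS {m} x i = x i := by
      intro x i hi
      have hne : ¬ i ∈ ({m} : Finset ℕ) := by
        simp only [Finset.mem_singleton]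
        intro h
        exact hmI (h ▸ hi)
      simp [flipS, hne]
    apply final V m hVopen hVne
    · intro x
      constructor
      · intro h i hi
        rw [← hcoord x i hi]
        exact h i hi
      · intro h i hi
        rw [hcoord x i hi]
        exact h i hi
    · right
      apply hM.mono
      intro w hw
      rw [Set.mem_symmDiff]
      exact Or.inr ⟨hVsub hw.1, hw.2⟩
end
end

section
/- Let E_0 be the eventual-agreement equivalence relation on 2^ℕ, and for distinct x, y ∈ 2^ℕ with x E_0 y let δ(x, y) = min{n : x(m) = y(m) for all m ≥ n} and c({x, y}) = 1 if Σ_{i<δ(x,y)} x(i) + Σ_{i<δ(x,y)} y(i) is even, c({x, y}) = 2 otherwise. Define the relation F on 2^ℕ by x F y if and only if x = y or c({x, y}) = 1. Then F is an equivalence relation refining E_0, and every E_0-class is the union of exactly two F-classes. -/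
open Classical

noncomputable section

/-- Partial sum of bits. -/
def Tsum (x : ℕ → Bool) (n : ℕ) : ℕ := (Finset.range n).sum fun i => (x i).toNat

lemma Tsum_split (x : ℕ → Bool) {d n : ℕ} (h : d ≤ n) :
    Tsum x n = Tsum x d + ((Finset.Ico d n).sum fun i => (x i).toNat) := by
  rw [Tsum, Tsum, Finset.range_eq_Ico]
  rw [Finset.range_eq_Ico]; exact (Finset.sum_Ico_consecutive (fun i => (x i).toNat) (Nat.zero_le d) h).symm

lemma colorSum_even_iff {x y : ℕ → Bool} {n : ℕ} (hn : ∀ m ≥ n, x m = y m) :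
    Even (colorSum x y) ↔ Even (Tsum x n + Tsum y n) := by
  have h : ∃ n, ∀ m ≥ n, x m = y m := ⟨n, hn⟩
  rw [colorSum, dif_pos h]
  have hd : Nat.find h ≤ n := Nat.find_le hn
  have hag : ∀ m ≥ Nat.find h, x m = y m := Nat.find_spec h
  have heq : ((Finset.Ico (Nat.find h) n).sum fun i => (x i).toNat)
      = ((Finset.Ico (Nat.find h) n).sum fun i => (y i).toNat) :=
    Finset.sum_congr rfl fun i hi => by rw [hag i (Finset.mem_Ico.mp hi).1]
  rw [Tsum_split x hd, Tsum_split y hd, ← heq]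
  have hre : (Tsum x (Nat.find h) + ((Finset.Ico (Nat.find h) n).sum fun i => (x i).toNat))
      + (Tsum y (Nat.find h) + ((Finset.Ico (Nat.find h) n).sum fun i => (x i).toNat))
      = (Tsum x (Nat.find h) + Tsum y (Nat.find h))
        + 2 * ((Finset.Ico (Nat.find h) n).sum fun i => (x i).toNat) := by ring
  rw [hre]
  simp only [Tsum, Nat.even_iff]
  omega

lemma E0_refl (x : ℕ → Bool) : E0 x x := ⟨0, fun _ _ => rfl⟩

lemma E0_trans {x y z : ℕ → Bool} (h1 : E0 x y) (h2 : E0 y z) : E0 x z := by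
  obtain ⟨n1, hn1⟩ := h1; obtain ⟨n2, hn2⟩ := h2
  exact ⟨max n1 n2, fun m hm =>
    (hn1 m (le_trans (le_max_left _ _) hm)).trans (hn2 m (le_trans (le_max_right _ _) hm))⟩

lemma flip0_agree (x : ℕ → Bool) : ∀ m ≥ 1, x m = flip0 x m := by
  intro m hm
  simp [flip0, Nat.one_le_iff_ne_zero.mp hm]

lemma flip0_ne (x : ℕ → Bool) : x ≠ flip0 x := by
  intro h
  have := congrFun h 0
  simp [flip0] at this

lemma Tsum_flip0_odd (x : ℕ → Bool) {n : ℕ} (hn : 1 ≤ n) :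
    ¬ Even (Tsum x n + Tsum (flip0 x) n) := by
  obtain ⟨m, rfl⟩ := Nat.exists_eq_add_of_le hn
  have h1 : Tsum x (1 + m) = ((Finset.range m).sum fun i => (x (i + 1)).toNat) + (x 0).toNat := by
    rw [Tsum, Nat.add_comm 1 m, Finset.sum_range_succ']
  have h2 : Tsum (flip0 x) (1 + m)
      = ((Finset.range m).sum fun i => (x (i + 1)).toNat) + (!(x 0)).toNat := by
    rw [Tsum, Nat.add_comm 1 m, Finset.sum_range_succ']
    simp [flip0]
  have h3 : (x 0).toNat + (!(x 0)).toNat = 1 := by cases x 0 <;> rfl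
  have : Tsum x (1 + m) + Tsum (flip0 x) (1 + m)
      = 2 * ((Finset.range m).sum fun i => (x (i + 1)).toNat) + 1 := by
    rw [h1, h2]; omega
  rw [this]
  simp [Nat.even_add_one, Nat.even_add]

/-- `F0` is an equivalence relation refining `E₀`, and every `E₀`-class is the union of
exactly two `F0`-classes. -/
theorem F0_equivalence_two_classes :
    Equivalence F0 ∧ (∀ x y : ℕ → Bool, F0 x y → E0 x y) ∧
    ∀ x : ℕ → Bool, ∃ u v : ℕ → Bool, ¬ F0 u v ∧
      {y | E0 x y} = {y | F0 u y} ∪ {y | F0 v y} := by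
  refine ⟨⟨fun x => Or.inl rfl, ?_, ?_⟩, ?_, ?_⟩
  · -- symm
    rintro x y (rfl | ⟨hE, hev⟩)
    · exact Or.inl rfl
    · obtain ⟨n, hn⟩ := hE
      refine Or.inr ⟨E0_symm ⟨n, hn⟩, ?_⟩
      rw [colorSum_even_iff (fun m hm => (hn m hm).symm)]
      rw [colorSum_even_iff hn] at hev
      rwa [Nat.add_comm]
  · -- trans
    rintro x y z (rfl | ⟨hE1, he1⟩) h2
    · exact h2
    rcases h2 with rfl | ⟨hE2, he2⟩
    · exact Or.inr ⟨hE1, he1⟩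
    obtain ⟨n1, hn1⟩ := hE1
    obtain ⟨n2, hn2⟩ := hE2
    set N := max n1 n2 with hN
    have hxy : ∀ m ≥ N, x m = y m := fun m hm => hn1 m (le_trans (le_max_left _ _) hm)
    have hyz : ∀ m ≥ N, y m = z m := fun m hm => hn2 m (le_trans (le_max_right _ _) hm)
    have hxz : ∀ m ≥ N, x m = z m := fun m hm => (hxy m hm).trans (hyz m hm)
    refine Or.inr ⟨⟨N, hxz⟩, ?_⟩
    rw [colorSum_even_iff hxy] at he1
    rw [colorSum_even_iff hyz] at he2
    rw [colorSum_even_iff hxz]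
    rw [Nat.even_add] at he1 he2 ⊢
    tauto
  · -- refines E0
    rintro x y (rfl | ⟨hE, _⟩)
    · exact E0_refl x
    · exact hE
  · -- two classes
    intro x
    refine ⟨x, flip0 x, ?_, ?_⟩
    · rintro (h | ⟨hE, hev⟩)
      · exact flip0_ne x h
      · rw [colorSum_even_iff (flip0_agree x)] at hev
        exact Tsum_flip0_odd x le_rfl hev
    · ext y
      simp only [Set.mem_setOf_eq, Set.mem_union]
      constructor
      · intro hE
        obtain ⟨n, hn⟩ := hE
        set N := max n 1 with hN
        have hxy : ∀ m ≥ N, x m = y m := fun m hm => hn m (le_trans (le_max_left _ _) hm)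
        have hfx : ∀ m ≥ N, x m = flip0 x m :=
          fun m hm => flip0_agree x m (le_trans (le_max_right _ _) hm)
        by_cases hc : Even (colorSum x y)
        · exact Or.inl (Or.inr ⟨⟨N, hxy⟩, hc⟩)
        · refine Or.inr (Or.inr ⟨⟨N, fun m hm => ((hfx m hm).symm.trans (hxy m hm))⟩, ?_⟩)
          rw [colorSum_even_iff hxy] at hc
          rw [colorSum_even_iff (fun m hm => ((hfx m hm).symm.trans (hxy m hm)))]
          have hodd := Tsum_flip0_odd x (le_max_right n 1) (n := N)
          rw [Nat.even_add] at hc hodd ⊢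
          tauto
      · rintro ((rfl | ⟨hE, _⟩) | (rfl | ⟨hE, _⟩))
        · exact E0_refl _
        · exact hE
        · exact ⟨1, flip0_agree x⟩
        · exact E0_trans ⟨1, flip0_agree x⟩ hE
end
end

section
/- Let E_0 be the eventual-agreement equivalence relation on 2^ℕ, and define F on 2^ℕ by: x F y if and only if x = y, or x E_0 y and Σ_{i<δ(x,y)} x(i) + Σ_{i<δ(x,y)} y(i) is even, where δ(x, y) = min{n : x(m) = y(m) for all m ≥ n}. Let σ : 2^ℕ → 2^ℕ be the map that flips the coordinate 0 of its input (σ(x)(0) = 1 − x(0) and σ(x)(n) = x(n) for n > 0). Then there is no Borel set W ⊆ 2^ℕ that is F-invariant (x ∈ W and x F y imply y ∈ W) and satisfies W ∪ σ(W) = 2^ℕ and W ∩ σ(W) = ∅. -/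
open Classical

noncomputable section

namespace NoBorelF0

open MeasureTheory

abbrev XX := ℕ → Bool

instance : IsTopologicalAddGroup Bool :=
  { continuous_add := continuous_of_discreteTopology
    continuous_neg := continuous_of_discreteTopology }

def μ : Measure XX :=
  Measure.addHaarMeasure (⊤ : TopologicalSpace.PositiveCompacts XX)

instance : IsProbabilityMeasure μ := by
  constructor
  have h := Measure.addHaarMeasure_self (K₀ := (⊤ : TopologicalSpace.PositiveCompacts XX))
  simpa [μ] using h

instance : μ.IsAddLeftInvariant := Measure.isAddLeftInvariant_addHaarMeasure _

lemma bool_add (a b : Bool) : a + b = xor a b := rfl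

def Cyl (n : ℕ) (s : XX) : Set XX := {x | ∀ i < n, x i = s i}

def cylSet : Set (Set XX) := {A | ∃ n s, A = Cyl n s}

def e00 : XX := fun k => decide (k = 0)

def e0m (m : ℕ) : XX := fun k => decide (k = 0) || decide (k = m)

lemma add_e00 (x : XX) : e00 + x = flip0 x := by
  funext k
  cases k with
  | zero => simp [bool_add, Pi.add_apply, e00, flip0]
  | succ n => simp [bool_add, Pi.add_apply, e00, flip0]

lemma add_add_cancel (v x : XX) : v + (v + x) = x := by
  funext k
  show xor (v k) (xor (v k) (x k)) = x k
  rw [← Bool.xor_assoc, Bool.xor_self, Bool.false_xor]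

lemma flip0_invol (x : XX) : flip0 (flip0 x) = x := by
  funext k
  by_cases h : k = 0 <;> simp [flip0, h]

lemma F0_e0m (m : ℕ) (hm : m ≠ 0) (x : XX) : F0 x (e0m m + x) := by
  set y := e0m m + x with hy
  have hyk : ∀ k, y k = xor (decide (k = 0) || decide (k = m)) (x k) := fun k => rfl
  have hne : ∀ k, k ≠ 0 → k ≠ m → y k = x k := by
    intro k h0 hmk; rw [hyk]; simp [h0, hmk]
  have hy0 : y 0 = !(x 0) := by rw [hyk]; simp
  have hym : y m = !(x m) := by rw [hyk]; simp
  have hE' : ∃ n : ℕ, ∀ j ≥ n, x j = y j :=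
    ⟨m + 1, fun j hj => (hne j (by omega) (by omega)).symm⟩
  have hfind : Nat.find hE' = m + 1 := by
    rw [Nat.find_eq_iff]
    constructor
    · exact fun j hj => (hne j (by omega) (by omega)).symm
    · intro k hk hkp
      have h2 := hkp m (by omega)
      rw [hym] at h2
      exact absurd h2 (by cases x m <;> simp)
  have hcs : Even (colorSum x y) := by
    unfold colorSum
    rw [dif_pos hE', hfind, ← Finset.sum_add_distrib]
    have hmmem : m ∈ Finset.range (m + 1) := by simp
    have h0mem : (0 : ℕ) ∈ (Finset.range (m + 1)).erase m := by
      rw [Finset.mem_erase]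
      exact ⟨by omega, by simp⟩
    rw [← Finset.add_sum_erase _ _ hmmem, ← Finset.add_sum_erase _ _ h0mem]
    have fm : (x m).toNat + (y m).toNat = 1 := by rw [hym]; cases x m <;> rfl
    have f0 : (x 0).toNat + (y 0).toNat = 1 := by rw [hy0]; cases x 0 <;> rfl
    have hrest : (((Finset.range (m + 1)).erase m).erase 0).sum
        (fun i => (x i).toNat + (y i).toNat) =
        2 * ((((Finset.range (m + 1)).erase m).erase 0).sum fun i => (x i).toNat) := by
      rw [Finset.mul_sum]
      apply Finset.sum_congr rfl
      intro i hi
      simp only [Finset.mem_erase] at hi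
      rw [hne i hi.1 hi.2.1]
      omega
    rw [fm, f0, hrest]
    exact ⟨1 + (((Finset.range (m + 1)).erase m).erase 0).sum (fun i => (x i).toNat),
      by ring⟩
  exact Or.inr ⟨hE', hcs⟩

lemma measurableSet_cyl (n : ℕ) (s : XX) : MeasurableSet (Cyl n s) := by
  have h : Cyl n s = ⋂ i ∈ Set.Iio n, (fun x : XX => x i) ⁻¹' {s i} := by
    ext x; simp [Cyl]
  rw [h]
  exact MeasurableSet.biInter (Set.to_countable _)
    fun i _ => measurable_pi_apply i (measurableSet_singleton _)

lemma coord_gen (i : ℕ) (b : Bool) :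
    MeasurableSet[MeasurableSpace.generateFrom cylSet] {x : XX | x i = b} := by
  have h : {x : XX | x i = b} =
      ⋃ u : {u : Fin (i + 1) → Bool // u ⟨i, Nat.lt_succ_self i⟩ = b},
        Cyl (i + 1) (fun j => if h : j < i + 1 then u.1 ⟨j, h⟩ else false) := by
    ext x
    simp only [Set.mem_setOf_eq, Set.mem_iUnion]
    constructor
    · intro hx
      refine ⟨⟨fun j => x j.1, hx⟩, fun j hj => ?_⟩
      simp [hj]
    · rintro ⟨u, hu⟩
      have h2 := hu i (Nat.lt_succ_self i)
      simp only [Nat.lt_succ_self, dif_pos] at h2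
      rw [h2]; exact u.2
  rw [h]
  exact MeasurableSet.iUnion fun u =>
    MeasurableSpace.measurableSet_generateFrom ⟨i + 1, _, rfl⟩

lemma coord_meas (i : ℕ) :
    @Measurable XX Bool (MeasurableSpace.generateFrom cylSet) _ (fun x => x i) :=
  @measurable_to_countable' Bool XX _ _ (MeasurableSpace.generateFrom cylSet)
    _ (fun b => coord_gen i b)

lemma hgen : (inferInstance : MeasurableSpace XX) = MeasurableSpace.generateFrom cylSet := by
  apply le_antisymm
  · show MeasurableSpace.pi ≤ MeasurableSpace.generateFrom cylSet
    refine iSup_le fun i => ?_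
    intro A hA
    obtain ⟨t, -, rfl⟩ := hA
    have h : (fun b : XX => b i) ⁻¹' t = ⋃ b ∈ t, {x : XX | x i = b} := by
      ext x; simp
    rw [h]
    exact MeasurableSet.biUnion (t.to_countable) fun b _ => coord_gen i b
  · apply MeasurableSpace.generateFrom_le
    rintro A ⟨n, s, rfl⟩
    exact measurableSet_cyl n s

lemma hpi : IsPiSystem cylSet := by
  rintro A ⟨n, s, rfl⟩ B ⟨m, t, rfl⟩ hne
  obtain ⟨x, hxs, hxt⟩ := hne
  refine ⟨max n m, x, ?_⟩
  ext y
  simp only [Set.mem_inter_iff, Cyl, Set.mem_setOf_eq]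
  constructor
  · rintro ⟨h1, h2⟩ i hi
    rcases Nat.lt_or_ge i n with h | h
    · rw [h1 i h]; exact (hxs i h).symm
    · rw [h2 i (by omega)]; exact (hxt i (by omega)).symm
  · intro h
    refine ⟨fun i hi => ?_, fun i hi => ?_⟩
    · rw [h i (by omega)]; exact hxs i hi
    · rw [h i (by omega)]; exact hxt i hi

lemma preimage_cyl (v : XX) (n : ℕ) (s : XX) (hv0 : v 0 = true)
    (hv : ∀ i, 0 < i → i < n → v i = false) :
    (fun x => v + x) ⁻¹' Cyl n s = Cyl n (e00 + s) := by
  ext x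
  show (∀ i < n, (v + x) i = s i) ↔ ∀ i < n, x i = (e00 + s) i
  refine forall_congr' fun i => forall_congr' fun hi => ?_
  show xor (v i) (x i) = s i ↔ x i = xor (e00 i) (s i)
  obtain rfl | hpos := Nat.eq_zero_or_pos i
  · rw [hv0]
    have he : e00 0 = true := rfl
    rw [he]
    cases x 0 <;> cases s 0 <;> simp
  · have h1 : v i = false := hv i hpos hi
    have h2 : e00 i = false := by simp [e00]; omega
    rw [h1, h2]
    simp

lemma cyl_zero (s : XX) : Cyl 0 s = Set.univ := by
  ext x; simp [Cyl]

theorem no_borel_F0_invariant_half' :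
    ¬ ∃ W : Set (ℕ → Bool), MeasurableSet W ∧
      (∀ x ∈ W, ∀ y : ℕ → Bool, F0 x y → y ∈ W) ∧
      W ∪ flip0 '' W = Set.univ ∧ W ∩ flip0 '' W = ∅ := by
  rintro ⟨W, hWm, hWinv, hWu, hWd⟩
  -- translations by double flips preserve W
  have hWT : ∀ m : ℕ, m ≠ 0 → (fun x => e0m m + x) ⁻¹' W = W := by
    intro m hm
    ext x
    simp only [Set.mem_preimage]
    constructor
    · intro hx
      have hf := F0_e0m m hm (e0m m + x)
      rw [add_add_cancel] at hf
      exact hWinv _ hx x hf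
    · intro hx
      exact hWinv x hx _ (F0_e0m m hm x)
  -- translation by e00 maps W to its complement
  have hσ : (fun x => e00 + x) ⁻¹' W = Wᶜ := by
    ext x
    simp only [Set.mem_preimage, Set.mem_compl_iff, add_e00]
    constructor
    · intro h hx
      have hx2 : x ∈ W ∩ flip0 '' W := ⟨hx, ⟨flip0 x, h, flip0_invol x⟩⟩
      rw [hWd] at hx2
      exact hx2
    · intro hx
      have hx2 : x ∈ W ∪ flip0 '' W := by rw [hWu]; trivial
      rcases hx2 with h | h
      · exact absurd h hx
      · obtain ⟨w, hw, rfl⟩ := h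
        rwa [flip0_invol]
  have key : ∀ n s, μ.restrict W (Cyl n s) = ((2 : ENNReal)⁻¹ • μ) (Cyl n s) := by
    intro n s
    have hm0 : max 1 n ≠ 0 := by omega
    have hmn : n ≤ max 1 n := le_max_right _ _
    have hpre1 : (fun x => e0m (max 1 n) + x) ⁻¹' Cyl n s = Cyl n (e00 + s) := by
      apply preimage_cyl
      · simp [e0m]
      · intro i h0 hi
        simp only [e0m, Bool.or_eq_false_iff, decide_eq_false_iff_not]
        omega
    have hpre0 : (fun x => e00 + x) ⁻¹' Cyl n s = Cyl n (e00 + s) := by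
      apply preimage_cyl
      · rfl
      · intro i h0 hi
        simp only [e00, decide_eq_false_iff_not]
        omega
    have e1 : μ (W ∩ Cyl n s) = μ (W ∩ Cyl n (e00 + s)) := by
      conv_lhs => rw [← measure_preimage_add μ (e0m (max 1 n)) (W ∩ Cyl n s)]
      rw [Set.preimage_inter, hWT _ hm0, hpre1]
    have e2 : μ (W ∩ Cyl n s) = μ (Wᶜ ∩ Cyl n (e00 + s)) := by
      conv_lhs => rw [← measure_preimage_add μ e00 (W ∩ Cyl n s)]
      rw [Set.preimage_inter, hσ, hpre0]
    have e3 : μ (Cyl n (e00 + s) ∩ W) + μ (Cyl n (e00 + s) \ W) = μ (Cyl n (e00 + s)) :=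
      measure_inter_add_diff _ hWm
    have e4 : μ (Cyl n (e00 + s)) = μ (Cyl n s) := by
      rw [← hpre0]
      exact measure_preimage_add μ e00 _
    have e5 : μ (W ∩ Cyl n s) + μ (W ∩ Cyl n s) = μ (Cyl n s) := by
      calc μ (W ∩ Cyl n s) + μ (W ∩ Cyl n s)
          = μ (W ∩ Cyl n (e00 + s)) + μ (Wᶜ ∩ Cyl n (e00 + s)) := by rw [← e1, ← e2]
        _ = μ (Cyl n (e00 + s) ∩ W) + μ (Cyl n (e00 + s) \ W) := by
            rw [Set.inter_comm, Set.diff_eq_compl_inter]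
        _ = μ (Cyl n (e00 + s)) := e3
        _ = μ (Cyl n s) := e4
    have h2 : (2 : ENNReal) * μ (W ∩ Cyl n s) = μ (Cyl n s) := by
      rw [two_mul]; exact e5
    rw [Measure.restrict_apply (measurableSet_cyl n s), Measure.smul_apply, smul_eq_mul]
    calc μ (Cyl n s ∩ W) = μ (W ∩ Cyl n s) := by rw [Set.inter_comm]
      _ = (2 : ENNReal)⁻¹ * ((2 : ENNReal) * μ (W ∩ Cyl n s)) := by
          rw [← mul_assoc, ENNReal.inv_mul_cancel two_ne_zero ENNReal.ofNat_ne_top, one_mul]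
      _ = (2 : ENNReal)⁻¹ * μ (Cyl n s) := by rw [h2]
  haveI : IsFiniteMeasure (μ.restrict W) :=
    ⟨by rw [Measure.restrict_apply_univ]; exact measure_lt_top μ W⟩
  have hmeq : μ.restrict W = ((2 : ENNReal)⁻¹ • μ) := by
    refine ext_of_generate_finite cylSet hgen hpi ?_ ?_
    · rintro A ⟨n, s, rfl⟩
      exact key n s
    · simpa [cyl_zero] using key 0 (fun _ => false)
  have hWhalf : μ W = 2⁻¹ := by
    have h1 := congrArg (fun ν : Measure XX => ν Set.univ) hmeq
    simp only [Measure.restrict_apply_univ, Measure.smul_apply, smul_eq_mul,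
      measure_univ, mul_one] at h1
    exact h1
  have h2 := congrArg (fun ν : Measure XX => ν W) hmeq
  simp only [Measure.restrict_apply hWm, Set.inter_self, Measure.smul_apply,
    smul_eq_mul, hWhalf] at h2
  -- h2 : 2⁻¹ = 2⁻¹ * 2⁻¹
  nth_rewrite 1 [← mul_one ((2 : ENNReal)⁻¹)] at h2
  rw [ENNReal.mul_right_inj (by norm_num) (by norm_num)] at h2
  rw [eq_comm, ENNReal.inv_eq_one] at h2
  norm_num at h2

end NoBorelF0

/-- There is no Borel `F0`-invariant set `W ⊆ 2^ℕ` with `W ∪ σ(W) = 2^ℕ` and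
`W ∩ σ(W) = ∅`, where `σ = flip0` flips coordinate `0`. -/
theorem no_borel_F0_invariant_half :
    ¬ ∃ W : Set (ℕ → Bool), MeasurableSet W ∧
      (∀ x ∈ W, ∀ y : ℕ → Bool, F0 x y → y ∈ W) ∧
      W ∪ flip0 '' W = Set.univ ∧ W ∩ flip0 '' W = ∅ := by
  exact NoBorelF0.no_borel_F0_invariant_half'
end
end
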